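/- Let R be a commutative Noetherian ring and M a finitely generated R-module satisfying Serre's condition (S_1). Then there exists a filtration 0 = M_0 ⊆ M_1 ⊆ ⋯ ⊆ M_l = M with l ≤ Σ_{p ∈ Ass_R(M)} ℓℓ(R_p), such that for each i there is a minimal prime p_i of R with p_i · (M_i/M_{i−1}) = 0, i.e., M_i/M_{i−1} is a module over R/p_i. -/

import Mathlib

universe u

open scoped Classical in
/-- The Loewy length of the localization `R_p`: the least `n` with `(p R_p)ⁿ = 0`
(for `p` prime; junk value `0` otherwise). -/
noncomputable def loewyLengthAt (R : Type u) [CommRing R] (p : Ideal R) : ℕ :=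
  if hp : p.IsPrime then
    sInf {n : ℕ | (p.map (algebraMap R (Localization (@Ideal.primeCompl R _ p hp)))) ^ n = ⊥}
  else 0

section Aux

variable {R : Type u} [CommRing R]

lemma aux_exists_pow_map_eq_bot [IsNoetherianRing R] {q : Ideal R}
    (hq : q ∈ minimalPrimes R) :
    ∃ n : ℕ, (q.map (algebraMap R (Localization (q.primeCompl (hp := hq.1.1))))) ^ n = ⊥ := by
  haveI hqp : q.IsPrime := hq.1.1
  haveI : IsNoetherianRing (Localization q.primeCompl) :=
    IsLocalization.isNoetherianRing q.primeCompl _ ‹IsNoetherianRing R›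
  obtain ⟨n, hn⟩ := IsNoetherianRing.isNilpotent_nilradical (Localization q.primeCompl)
  refine ⟨n, le_bot_iff.mp ?_⟩
  have hmaple : q.map (algebraMap R (Localization q.primeCompl))
      ≤ nilradical (Localization q.primeCompl) := by
    rw [Ideal.map_le_iff_le_comap]
    intro a ha
    rw [Ideal.mem_comap, nilradical_eq_sInf, Submodule.mem_sInf]
    intro P hP
    haveI hP' : Ideal.IsPrime P := hP
    have hPle : Ideal.comap (algebraMap R (Localization q.primeCompl)) P ≤ q := by
      intro x hx
      by_contra hxq
      have hu : IsUnit (algebraMap R (Localization q.primeCompl) x) :=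
        IsLocalization.map_units (Localization q.primeCompl) (⟨x, hxq⟩ : q.primeCompl)
      exact hP'.ne_top (Ideal.eq_top_of_isUnit_mem P hx hu)
    have : q ≤ Ideal.comap (algebraMap R (Localization q.primeCompl)) P :=
      hq.2 ⟨Ideal.IsPrime.comap _, bot_le⟩ hPle
    exact this ha
  calc (q.map (algebraMap R (Localization q.primeCompl))) ^ n
      ≤ (nilradical (Localization q.primeCompl)) ^ n := Ideal.pow_right_mono hmaple n
    _ = ⊥ := hn

lemma aux_loewy_pow_eq_bot [IsNoetherianRing R] {q : Ideal R}
    (hq : q ∈ minimalPrimes R) :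
    (q.map (algebraMap R (Localization (q.primeCompl (hp := hq.1.1))))) ^ (loewyLengthAt R q)
      = ⊥ := by
  haveI hqp : q.IsPrime := hq.1.1
  have h := aux_exists_pow_map_eq_bot hq
  rw [loewyLengthAt, dif_pos hqp]
  exact Nat.sInf_mem h

/-- A uniform annihilator outside `q` for `q ^ ℓℓ(R_q)`. -/
lemma aux_exists_ann [IsNoetherianRing R] {q : Ideal R}
    (hq : q ∈ minimalPrimes R) :
    ∃ s : R, s ∉ q ∧ ∀ b ∈ q ^ loewyLengthAt R q, s * b = 0 := by
  classical
  haveI hqp : q.IsPrime := hq.1.1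
  have h := aux_loewy_pow_eq_bot hq
  rw [← Ideal.map_pow] at h
  have hker : q ^ loewyLengthAt R q
      ≤ RingHom.ker (algebraMap R (Localization q.primeCompl)) :=
    (Ideal.map_eq_bot_iff_le_ker _).mp h
  obtain ⟨T, hT⟩ := (IsNoetherian.noetherian (q ^ loewyLengthAt R q : Ideal R))
  have hx : ∀ a : T, ∃ m : q.primeCompl, (m : R) * a = 0 := by
    rintro ⟨a, ha⟩
    have : algebraMap R (Localization q.primeCompl) a = 0 :=
      hker (hT ▸ Ideal.subset_span ha)
    exact (IsLocalization.map_eq_zero_iff q.primeCompl _ a).mp this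
  choose g hg using hx
  refine ⟨((∏ a : T, g a : q.primeCompl) : R), (∏ a : T, g a).2, ?_⟩
  intro b hb
  have hle : Ideal.span (T : Set R)
      ≤ LinearMap.ker (LinearMap.lsmul R R ((∏ a : T, g a : q.primeCompl) : R)) := by
    rw [Ideal.span_le]
    intro a ha
    simp only [SetLike.mem_coe, LinearMap.mem_ker, LinearMap.lsmul_apply, smul_eq_mul]
    have h1 : (∏ x : T, g x) = g ⟨a, ha⟩ * ∏ x ∈ Finset.univ.erase ⟨a, ha⟩, g x :=
      (Finset.mul_prod_erase _ _ (Finset.mem_univ _)).symm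
    calc ((∏ x : T, g x : q.primeCompl) : R) * a
        = ((∏ x ∈ Finset.univ.erase (⟨a, ha⟩ : T), g x : q.primeCompl) : R)
            * ((g ⟨a, ha⟩ : R) * a) := by
          rw [h1]; push_cast; ring
      _ = 0 := by rw [hg ⟨a, ha⟩, mul_zero]
  have hb' : b ∈ Ideal.span (T : Set R) := by
    show b ∈ Submodule.span R (T : Set R)
    rwa [hT]
  have := hle hb'
  simpa using this

variable {M : Type u} [AddCommGroup M] [Module R M]

lemma aux_smul_step (J p : Ideal R) (m : M) (hm : m ∈ J • (⊤ : Submodule R M))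
    {a : R} (ha : a ∈ p) : a • m ∈ (J * p) • (⊤ : Submodule R M) := by
  have hcomap : J • (⊤ : Submodule R M)
      ≤ Submodule.comap (LinearMap.lsmul R M a) ((J * p) • ⊤) := by
    rw [Submodule.smul_le]
    intro r hr n _
    simp only [Submodule.mem_comap, LinearMap.lsmul_apply]
    rw [smul_smul, mul_comm a r]
    exact Submodule.smul_mem_smul (Ideal.mul_mem_mul hr ha) Submodule.mem_top
  exact hcomap hm

/-- Construct the filtration from a list of minimal primes whose product kills `M`. -/
lemma aux_chain (L : List (Ideal R)) (hmem : ∀ p ∈ L, p ∈ minimalPrimes R)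
    (hann : L.prod • (⊤ : Submodule R M) = ⊥) :
    ∃ f : Fin (L.length + 1) → Submodule R M,
      Monotone f ∧ f 0 = ⊥ ∧ f (Fin.last L.length) = ⊤ ∧
      ∀ i : Fin L.length, ∃ p ∈ minimalPrimes R,
        ∀ m ∈ f i.succ, ∀ a ∈ p, a • m ∈ f i.castSucc := by
  set l := L.length with hl
  have hanti : Antitone (fun k => (L.take k).prod) := by
    apply antitone_nat_of_succ_le
    intro k
    by_cases hk : k < l
    · rw [List.prod_take_succ _ _ hk]
      exact Ideal.mul_le_left
    · rw [List.take_of_length_le (by omega), List.take_of_length_le (by omega)]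
  refine ⟨fun i => (L.take (l - (i : ℕ))).prod • ⊤, ?_, ?_, ?_, ?_⟩
  · intro i j hij
    exact Submodule.smul_mono_left (hanti (Nat.sub_le_sub_left hij l))
  · show (L.take (l - 0)).prod • ⊤ = ⊥
    rw [Nat.sub_zero, hl, List.take_length, hann]
  · show (L.take (l - l)).prod • ⊤ = ⊤
    rw [Nat.sub_self, List.take_zero, List.prod_nil, Ideal.one_eq_top, Submodule.top_smul]
  · intro i
    have hi : (i : ℕ) < l := i.2
    have hkl : l - ((i : ℕ) + 1) < l := by omega
    refine ⟨L[l - ((i : ℕ) + 1)], hmem _ (List.getElem_mem hkl), ?_⟩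
    intro m hm a ha
    have hm' : m ∈ (L.take (l - ((i : ℕ) + 1))).prod • (⊤ : Submodule R M) := by
      simpa [Fin.val_succ] using hm
    have hgoal : a • m ∈ (L.take (l - ((i : ℕ) + 1) + 1)).prod • (⊤ : Submodule R M) := by
      rw [List.prod_take_succ _ _ hkl]
      exact aux_smul_step _ _ m hm' ha
    have hval : l - ((i : ℕ) + 1) + 1 = l - (i : ℕ) := by omega
    simpa [Fin.coe_castSucc, hval] using hgoal

end Aux

/-- If a finitely generated module `M` over a commutative Noetherian ring `R` satisfies
Serre's condition `(S₁)` (all associated primes of `M` are minimal primes of `R`), then `M`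
has a filtration `0 = M₀ ⊆ ⋯ ⊆ M_l = M` with `l ≤ Σ_{p ∈ Ass M} ℓℓ(R_p)` whose successive
quotients are each annihilated by some minimal prime `pᵢ` of `R` (hence are `R⧸pᵢ`-modules). -/
theorem filtration_of_S1 (R : Type u) [CommRing R] [IsNoetherianRing R]
    (M : Type u) [AddCommGroup M] [Module R M] [Module.Finite R M]
    (hS1 : associatedPrimes R M ⊆ minimalPrimes R)
    (hfin : (associatedPrimes R M).Finite) :
    ∃ (l : ℕ) (f : Fin (l + 1) → Submodule R M),
      Monotone f ∧ f 0 = ⊥ ∧ f (Fin.last l) = ⊤ ∧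
      l ≤ ∑ p ∈ hfin.toFinset, loewyLengthAt R p ∧
      ∀ i : Fin l, ∃ p ∈ minimalPrimes R,
        ∀ m ∈ f i.succ, ∀ a ∈ p, a • m ∈ f i.castSucc := by
  classical
  set s : Finset (Ideal R) := hfin.toFinset with hs
  set L : List (Ideal R) :=
    s.toList.flatMap (fun p => List.replicate (loewyLengthAt R p) p) with hL
  have hmem : ∀ p ∈ L, p ∈ minimalPrimes R := by
    intro p hp
    rw [hL, List.mem_flatMap] at hp
    obtain ⟨a, ha, hpa⟩ := hp
    rw [List.eq_of_mem_replicate hpa]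
    exact hS1 (by simpa [hs] using Finset.mem_toList.mp ha)
  have hlen : L.length = ∑ p ∈ s, loewyLengthAt R p := by
    rw [hL, List.length_flatMap]
    simp only [Function.comp_def, List.length_replicate]
    exact Finset.sum_map_toList s _
  have hprodle : ∀ q ∈ s, L.prod ≤ q ^ loewyLengthAt R q := by
    intro q hq
    obtain ⟨l1, l2, hdecomp⟩ := List.append_of_mem (Finset.mem_toList.mpr hq)
    rw [hL, hdecomp, List.flatMap_append, List.flatMap_cons, List.prod_append,
      List.prod_append, List.prod_replicate]
    exact le_trans Ideal.mul_le_right Ideal.mul_le_left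
  have hann : L.prod • (⊤ : Submodule R M) = ⊥ := by
    by_contra hne
    haveI : Nontrivial ↥(L.prod • (⊤ : Submodule R M)) :=
      Submodule.nontrivial_iff_ne_bot.mpr hne
    obtain ⟨q, hq⟩ := associatedPrimes.nonempty R ↥(L.prod • (⊤ : Submodule R M))
    have hqM : q ∈ associatedPrimes R M :=
      hq.map_of_injective _ (Submodule.injective_subtype _)
    obtain ⟨s0, hs0q, hs0⟩ := aux_exists_ann (hS1 hqM)
    have hqs : q ∈ s := by rw [hs]; exact hfin.mem_toFinset.mpr hqM
    have hle := hprodle q hqs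
    have hkill : ∀ y ∈ L.prod • (⊤ : Submodule R M), s0 • y = 0 := by
      intro y hy
      have hker : L.prod • (⊤ : Submodule R M)
          ≤ LinearMap.ker (LinearMap.lsmul R M s0) := by
        rw [Submodule.smul_le]
        intro r hr n _
        rw [LinearMap.mem_ker, LinearMap.lsmul_apply, smul_smul, hs0 r (hle hr), zero_smul]
      simpa using hker hy
    obtain ⟨hqp, x, hx⟩ := hq
    have hx0 : s0 • x = 0 := by
      apply Subtype.ext
      simpa using hkill _ x.2
    have : s0 ∈ q := by
      rw [hx]
      apply Ideal.le_radical
      rw [Submodule.mem_colon]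
      intro y hy
      rw [Set.mem_singleton_iff.mp hy, hx0, Submodule.mem_bot]
    exact hs0q this
  obtain ⟨f, h1, h2, h3, h4⟩ := aux_chain L hmem hann
  exact ⟨L.length, f, h1, h2, h3, hlen ▸ le_rfl, h4⟩
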